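/- For any real-valued random variable X and any ε ≥ 0, if the Wasserstein distance satisfies d_W(L(X), N(0,1)) ≤ ε, then the Kolmogorov distance satisfies d_K(L(X), N(0,1)) ≤ ε^{1/2}. -/

import Mathlib

open MeasureTheory ProbabilityTheory Real
open scoped ENNReal NNReal

lemma lipschitz_aux (c δ : ℝ) : LipschitzWith 1 (fun t : ℝ => max 0 (min δ (c - t))) := by
  apply LipschitzWith.of_dist_le_mul
  intro a b
  simp only [Real.dist_eq, NNReal.coe_one, one_mul]
  calc |max 0 (min δ (c - a)) - max 0 (min δ (c - b))|
      = |max (min δ (c - a)) 0 - max (min δ (c - b)) 0| := by rw [max_comm, max_comm (min δ (c-b))]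
    _ ≤ |min δ (c - a) - min δ (c - b)| := abs_max_sub_max_le_abs _ _ _
    _ ≤ max |δ - δ| |(c - a) - (c - b)| := abs_min_sub_min_le_max _ _ _ _
    _ ≤ |a - b| := by
        rw [sub_self, abs_zero]
        simp only [max_le_iff, abs_nonneg, true_and]
        rw [show c - a - (c - b) = -(a - b) by ring, abs_neg]

lemma gaussianPDFReal_le (t : ℝ) :
    gaussianPDFReal 0 1 t ≤ (Real.sqrt (2*π))⁻¹ := by
  rw [gaussianPDFReal]
  simp only [NNReal.coe_one, mul_one, sub_zero]
  calc (Real.sqrt (2*π))⁻¹ * Real.exp (-t^2/(2:ℝ))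
      ≤ (Real.sqrt (2*π))⁻¹ * 1 := by
        apply mul_le_mul_of_nonneg_left _ (by positivity)
        rw [← Real.exp_zero]
        apply Real.exp_le_exp.mpr
        nlinarith [sq_nonneg t]
    _ = (Real.sqrt (2*π))⁻¹ := mul_one _

lemma gauss_setIntegral_le (f : ℝ → ℝ) (hf : Measurable f) (hf0 : ∀ t, 0 ≤ f t)
    {s : Set ℝ} (hfi : IntegrableOn f s volume) (hs : MeasurableSet s) :
    ∫ t in s, f t ∂(gaussianReal 0 1) ≤ (Real.sqrt (2*π))⁻¹ * ∫ t in s, f t := by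
  have h1 : gaussianReal 0 1 = volume.withDensity
      (fun t => (((gaussianPDFReal 0 1 t).toNNReal : ℝ≥0) : ℝ≥0∞)) := by
    rw [gaussianReal_of_var_ne_zero _ one_ne_zero]
    rfl
  rw [h1, setIntegral_withDensity_eq_setIntegral_smul
    (measurable_gaussianPDFReal 0 1).real_toNNReal _ hs]
  have hint : Integrable (fun t => ((gaussianPDFReal 0 1 t).toNNReal : ℝ≥0) • f t)
      (volume.restrict s) := by
    apply Integrable.mono' ((hfi).const_mul ((Real.sqrt (2*π))⁻¹))
    · exact ((measurable_gaussianPDFReal 0 1).real_toNNReal.coe_nnreal_real.mul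
        hf).aestronglyMeasurable
    · refine Filter.Eventually.of_forall fun t => ?_
      rw [Real.norm_eq_abs, NNReal.smul_def, smul_eq_mul, abs_mul, abs_of_nonneg (hf0 t),
        abs_of_nonneg NNReal.zero_le_coe]
      apply mul_le_mul_of_nonneg_right _ (hf0 t)
      rw [Real.coe_toNNReal _ (gaussianPDFReal_nonneg 0 1 t)]
      exact gaussianPDFReal_le t
  calc ∫ t in s, ((gaussianPDFReal 0 1 t).toNNReal : ℝ≥0) • f t
      ≤ ∫ t in s, (Real.sqrt (2*π))⁻¹ * f t := by
        apply integral_mono hint ((hfi).const_mul _)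
        intro t
        simp only [NNReal.smul_def, smul_eq_mul]
        apply mul_le_mul_of_nonneg_right _ (hf0 t)
        rw [Real.coe_toNNReal _ (gaussianPDFReal_nonneg 0 1 t)]
        exact gaussianPDFReal_le t
    _ = (Real.sqrt (2*π))⁻¹ * ∫ t in s, f t := integral_const_mul _ _

lemma int_Ioc_sub_right (a δ : ℝ) (hδ : 0 ≤ δ) :
    ∫ t in Set.Ioc a (a+δ), (a + δ - t) = δ^2/2 := by
  rw [← intervalIntegral.integral_of_le (by linarith : a ≤ a + δ),
    intervalIntegral.integral_sub intervalIntegrable_const intervalIntegral.intervalIntegrable_id,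
    intervalIntegral.integral_const, integral_id, smul_eq_mul]
  ring

lemma int_Ioc_sub_left (a δ : ℝ) (hδ : 0 ≤ δ) :
    ∫ t in Set.Ioc a (a+δ), (t - a) = δ^2/2 := by
  rw [← intervalIntegral.integral_of_le (by linarith : a ≤ a + δ),
    intervalIntegral.integral_sub intervalIntegral.intervalIntegrable_id intervalIntegrable_const,
    intervalIntegral.integral_const, integral_id, smul_eq_mul]
  ring

lemma integrable_clamp_comp {α : Type*} [MeasurableSpace α] (ν : Measure α)
    [IsProbabilityMeasure ν] (Y : α → ℝ) (hY : Measurable Y) (c δ : ℝ) (hδ : 0 ≤ δ) :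
    Integrable (fun ω => max 0 (min δ (c - Y ω))) ν := by
  apply Integrable.mono' (integrable_const δ)
  · exact ((lipschitz_aux c δ).continuous.measurable.comp hY).aestronglyMeasurable
  · refine Filter.Eventually.of_forall fun ω => ?_
    rw [Real.norm_eq_abs, abs_of_nonneg (le_max_left _ _)]
    exact max_le hδ (min_le_left _ _)

theorem kolmogorov_le_sqrt_wasserstein
    {Ω : Type*} [MeasurableSpace Ω] {μ : Measure Ω} [IsProbabilityMeasure μ]
    (X : Ω → ℝ) (hXm : Measurable X) (hX1 : Integrable X μ)
    (ε : ℝ) (hε : 0 ≤ ε)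
    (hW : ∀ h : ℝ → ℝ, LipschitzWith 1 h →
      |(∫ ω, h (X ω) ∂μ) - ∫ x, h x ∂(gaussianReal 0 1)| ≤ ε) :
    ∀ x : ℝ, |(μ {ω | X ω ≤ x}).toReal - ((gaussianReal 0 1) (Set.Iic x)).toReal|
      ≤ Real.sqrt ε := by
  intro x
  set γ := gaussianReal 0 1 with hγdef
  set C : ℝ := (Real.sqrt (2*π))⁻¹ with hCdef
  have hCpos : 0 < C := by positivity
  set Fx : ℝ := (μ {ω | X ω ≤ x}).toReal with hFdef
  set Gx : ℝ := (γ (Set.Iic x)).toReal with hGdef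
  have hA : MeasurableSet {ω | X ω ≤ x} := hXm measurableSet_Iic
  have key : ∀ δ : ℝ, 0 < δ → |Fx - Gx| ≤ ε/δ + C*δ/2 := by
    intro δ hδ
    have hδ0 : 0 ≤ δ := hδ.le
    set g : ℝ → ℝ := fun t => max 0 (min δ (x + δ - t)) with hgdef
    set g2 : ℝ → ℝ := fun t => max 0 (min δ (x - t)) with hg2def
    have hg_nonneg : ∀ t, 0 ≤ g t := fun t => le_max_left _ _
    have hg_le : ∀ t, g t ≤ δ := fun t => max_le hδ0 (min_le_left _ _)
    have hg2_nonneg : ∀ t, 0 ≤ g2 t := fun t => le_max_left _ _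
    have hg2_le : ∀ t, g2 t ≤ δ := fun t => max_le hδ0 (min_le_left _ _)
    have hg_meas : Measurable g := (lipschitz_aux (x+δ) δ).continuous.measurable
    have hg2_meas : Measurable g2 := (lipschitz_aux x δ).continuous.measurable
    have hgintγ : Integrable g γ := integrable_clamp_comp γ id measurable_id (x+δ) δ hδ0
    have hg2intγ : Integrable g2 γ := integrable_clamp_comp γ id measurable_id x δ hδ0
    have hgintμ : Integrable (fun ω => g (X ω)) μ := integrable_clamp_comp μ X hXm (x+δ) δ hδ0
    have hg2intμ : Integrable (fun ω => g2 (X ω)) μ := integrable_clamp_comp μ X hXm x δ hδ0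
    have hindint : Integrable (({ω | X ω ≤ x}).indicator (fun _ => δ)) μ :=
      (integrable_const δ).indicator hA
    -- step 1 : δ * Fx ≤ ∫ g(X) dμ
    have step1 : δ * Fx ≤ ∫ ω, g (X ω) ∂μ := by
      have h1 : ∫ ω, ({ω | X ω ≤ x}).indicator (fun _ => δ) ω ∂μ = Fx * δ := by
        rw [integral_indicator_const _ hA]; simp [hFdef, smul_eq_mul, measureReal_def]
      rw [mul_comm, ← h1]
      apply integral_mono hindint hgintμ
      intro ω
      by_cases hω : X ω ≤ x
      · rw [Set.indicator_of_mem (show ω ∈ {ω | X ω ≤ x} from hω)]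
        have : δ ≤ x + δ - X ω := by linarith
        simp only [hgdef]
        rw [min_eq_left this, max_eq_right hδ0]
      · rw [Set.indicator_of_notMem (show ω ∉ {ω | X ω ≤ x} from hω)]
        exact hg_nonneg _
    -- step 2 : ∫ g dγ ≤ δ * Gx + C * (δ^2/2)
    have step2 : ∫ t, g t ∂γ ≤ δ * Gx + C * (δ^2/2) := by
      rw [← integral_add_compl (measurableSet_Iic (a := x)) hgintγ, Set.compl_Iic]
      have part1 : ∫ t in Set.Iic x, g t ∂γ ≤ δ * Gx := by
        have : ∫ t in Set.Iic x, g t ∂γ ≤ ∫ t in Set.Iic x, δ ∂γ := by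
          apply setIntegral_mono_on hgintγ.restrict
            (integrableOn_const (measure_lt_top _ _).ne) measurableSet_Iic
          exact fun t _ => hg_le t
        rw [setIntegral_const] at this
        calc ∫ t in Set.Iic x, g t ∂γ ≤ (γ (Set.Iic x)).toReal • δ := this
          _ = δ * Gx := by rw [smul_eq_mul, mul_comm, hGdef]
      have part2 : ∫ t in Set.Ioi x, g t ∂γ ≤ C * (δ^2/2) := by
        have heq : ∫ t in Set.Ioi x, g t ∂γ = ∫ t in Set.Ioc x (x+δ), g t ∂γ := by
          calc ∫ t in Set.Ioi x, g t ∂γ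
              = ∫ t in Set.Ioi x, (Set.Ioc x (x+δ)).indicator g t ∂γ := by
                apply setIntegral_congr_fun measurableSet_Ioi
                intro t ht
                by_cases h : t ≤ x + δ
                · rw [Set.indicator_of_mem (show t ∈ Set.Ioc x (x+δ) from ⟨ht, h⟩)]
                · rw [Set.indicator_of_notMem (fun hm => h hm.2)]
                  simp only [hgdef]
                  rw [max_eq_left (le_trans (min_le_right _ _) (by push_neg at h; linarith))]
            _ = ∫ t in Set.Ioi x ∩ Set.Ioc x (x+δ), g t ∂γ :=
                setIntegral_indicator measurableSet_Ioc
            _ = ∫ t in Set.Ioc x (x+δ), g t ∂γ := by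
                rw [Set.inter_eq_self_of_subset_right Set.Ioc_subset_Ioi_self]
        rw [heq]
        have hIOn : IntegrableOn g (Set.Ioc x (x+δ)) volume := by
          apply Integrable.mono' (integrableOn_const (C := δ) measure_Ioc_lt_top.ne)
          · exact hg_meas.aestronglyMeasurable.restrict
          · exact Filter.Eventually.of_forall fun t => by
              rw [Real.norm_eq_abs, abs_of_nonneg (hg_nonneg t)]; exact hg_le t
        calc ∫ t in Set.Ioc x (x+δ), g t ∂γ
            ≤ C * ∫ t in Set.Ioc x (x+δ), g t := by
              exact gauss_setIntegral_le g hg_meas hg_nonneg hIOn measurableSet_Ioc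
          _ = C * (δ^2/2) := by
              congr 1
              rw [show ∫ t in Set.Ioc x (x+δ), g t = ∫ t in Set.Ioc x (x+δ), (x + δ - t) from ?_,
                int_Ioc_sub_right x δ hδ0]
              apply setIntegral_congr_fun measurableSet_Ioc
              intro t ht
              simp only [hgdef]
              rw [min_eq_right (by linarith [ht.1, ht.2] : x + δ - t ≤ δ),
                max_eq_right (by linarith [ht.2] : (0:ℝ) ≤ x + δ - t)]
      linarith
    -- step 3 : upper bound
    have step3 : δ * Fx ≤ δ * Gx + C * (δ^2/2) + ε := by
      have hw := hW g (lipschitz_aux (x+δ) δ)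
      have := (abs_le.mp hw).2
      linarith
    -- step 4 : ∫ g2(X) dμ ≤ δ * Fx
    have step4 : ∫ ω, g2 (X ω) ∂μ ≤ δ * Fx := by
      have h1 : ∫ ω, ({ω | X ω ≤ x}).indicator (fun _ => δ) ω ∂μ = Fx * δ := by
        rw [integral_indicator_const _ hA]; simp [hFdef, smul_eq_mul, measureReal_def]
      rw [mul_comm, ← h1]
      apply integral_mono hg2intμ hindint
      intro ω
      by_cases hω : X ω ≤ x
      · rw [Set.indicator_of_mem (show ω ∈ {ω | X ω ≤ x} from hω)]; exact hg2_le _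
      · rw [Set.indicator_of_notMem (show ω ∉ {ω | X ω ≤ x} from hω)]
        simp only [hg2def]
        push_neg at hω
        rw [max_eq_left (le_trans (min_le_right _ _) (by linarith))]
    -- step 5 : δ * Gx ≤ ∫ g2 dγ + C * (δ^2/2)
    have step5 : δ * Gx ≤ (∫ t, g2 t ∂γ) + C * (δ^2/2) := by
      have hconst : IntegrableOn (fun _ : ℝ => δ) (Set.Iic x) γ :=
        integrableOn_const (measure_lt_top _ _).ne
      have h50 : δ * Gx = ∫ t in Set.Iic x, (δ:ℝ) ∂γ := by
        rw [setIntegral_const, smul_eq_mul, mul_comm, hGdef, measureReal_def]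
      have h51 : ∫ t in Set.Iic x, (δ:ℝ) ∂γ - ∫ t in Set.Iic x, g2 t ∂γ
          = ∫ t in Set.Iic x, (δ - g2 t) ∂γ := (integral_sub hconst hg2intγ.restrict).symm
      have hunion : Set.Iic (x-δ) ∪ Set.Ioc (x-δ) x = Set.Iic x :=
        Set.Iic_union_Ioc_eq_Iic (by linarith)
      have hsub_meas : Measurable (fun t => δ - g2 t) := measurable_const.sub hg2_meas
      have hsubintOn : ∀ s : Set ℝ, IntegrableOn (fun t => δ - g2 t) s γ := fun s =>
        ((integrable_const δ).sub hg2intγ).restrict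
      have h52 : ∫ t in Set.Iic x, (δ - g2 t) ∂γ
          = ∫ t in Set.Ioc (x-δ) x, (δ - g2 t) ∂γ := by
        rw [← hunion, setIntegral_union (Set.Iic_disjoint_Ioc le_rfl) measurableSet_Ioc
          (hsubintOn _) (hsubintOn _)]
        have : ∫ t in Set.Iic (x-δ), (δ - g2 t) ∂γ = 0 := by
          rw [show ∫ t in Set.Iic (x-δ), (δ - g2 t) ∂γ = ∫ _ in Set.Iic (x-δ), (0:ℝ) ∂γ from ?_]
          · simp
          apply setIntegral_congr_fun measurableSet_Iic
          intro t ht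
          simp only [hg2def]
          rw [min_eq_left (by simp only [Set.mem_Iic] at ht; linarith),
            max_eq_right hδ0, sub_self]
        rw [this, zero_add]
      have h53 : ∫ t in Set.Ioc (x-δ) x, (δ - g2 t) ∂γ ≤ C * (δ^2/2) := by
        have hIOn : IntegrableOn (fun t => δ - g2 t) (Set.Ioc (x-δ) x) volume := by
          apply Integrable.mono' (integrableOn_const (C := δ) measure_Ioc_lt_top.ne)
          · exact hsub_meas.aestronglyMeasurable.restrict
          · exact Filter.Eventually.of_forall fun t => by
              rw [Real.norm_eq_abs, abs_of_nonneg (by linarith [hg2_le t])]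
              exact sub_le_self δ (hg2_nonneg t)
        calc ∫ t in Set.Ioc (x-δ) x, (δ - g2 t) ∂γ
            ≤ C * ∫ t in Set.Ioc (x-δ) x, (δ - g2 t) := by
              exact gauss_setIntegral_le (fun t => δ - g2 t) hsub_meas
                (fun t => sub_nonneg.mpr (hg2_le t)) hIOn measurableSet_Ioc
          _ ≤ C * (δ^2/2) := by
              apply mul_le_mul_of_nonneg_left _ hCpos.le
              rw [show ∫ t in Set.Ioc (x-δ) x, (δ - g2 t)
                  = ∫ t in Set.Ioc (x-δ) x, (t - (x-δ)) from ?_]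
              · have h := int_Ioc_sub_left (x-δ) δ hδ0
                rw [show x - δ + δ = x by ring] at h
                rw [h]
              apply setIntegral_congr_fun measurableSet_Ioc
              intro t ht
              simp only [hg2def]
              rw [min_eq_right (by linarith [ht.1] : x - t ≤ δ),
                max_eq_right (by linarith [ht.2] : (0:ℝ) ≤ x - t)]
              ring
      have h54 : ∫ t in Set.Iic x, g2 t ∂γ ≤ ∫ t, g2 t ∂γ :=
        setIntegral_le_integral hg2intγ (Filter.Eventually.of_forall hg2_nonneg)
      linarith
    -- step 6 : lower bound
    have step6 : δ * Gx ≤ δ * Fx + C * (δ^2/2) + ε := by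
      have hw := hW g2 (lipschitz_aux x δ)
      have := (abs_le.mp hw).1
      linarith
    -- conclude the key bound
    rw [abs_sub_le_iff]
    constructor
    · calc Fx - Gx = ((Fx - Gx) * δ) / δ := by field_simp
        _ ≤ (ε + C*(δ^2/2)) / δ := by
            rw [div_le_div_iff_of_pos_right hδ]; nlinarith [step3]
        _ = ε/δ + C*δ/2 := by field_simp
    · calc Gx - Fx = ((Gx - Fx) * δ) / δ := by field_simp
        _ ≤ (ε + C*(δ^2/2)) / δ := by
            rw [div_le_div_iff_of_pos_right hδ]; nlinarith [step6]
        _ = ε/δ + C*δ/2 := by field_simp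
  -- final conclusion
  rcases eq_or_lt_of_le hε with h0 | hpos
  · subst h0
    rw [Real.sqrt_zero]
    by_contra hlt
    push_neg at hlt
    have hk := key (|Fx - Gx| / C) (by positivity)
    rw [zero_div] at hk
    have h2 : C * (|Fx - Gx| / C) / 2 = |Fx - Gx| / 2 := by field_simp
    linarith
  · set δ := Real.sqrt (2*ε/C) with hδdef
    have hδpos : 0 < δ := Real.sqrt_pos.mpr (by positivity)
    have hδ2 : δ^2 = 2*ε/C := Real.sq_sqrt (by positivity)
    have hk := key δ hδpos
    have hεeq : ε = C*δ^2/2 := by rw [hδ2]; field_simp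
    have heq : ε/δ + C*δ/2 = C*δ := by
      rw [hεeq]; field_simp; ring
    have h2C : 2*C ≤ 1 := by
      rw [hCdef]
      have h2 : (2:ℝ) ≤ Real.sqrt (2*π) := by
        rw [Real.le_sqrt (by norm_num) (by positivity)]
        nlinarith [Real.pi_gt_three]
      have hs : 0 < Real.sqrt (2*π) := by linarith
      have hCs : (Real.sqrt (2*π))⁻¹ * Real.sqrt (2*π) = 1 := inv_mul_cancel₀ hs.ne'
      nlinarith [inv_nonneg.mpr hs.le]
    have hfin : C*δ ≤ Real.sqrt ε := by
      rw [Real.le_sqrt (by positivity) hpos.le]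
      have : (C*δ)^2 = C * (2*ε) := by
        rw [mul_pow, hδ2]; field_simp
      rw [this]
      nlinarith
    linarith
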